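/- The complement of any arc in S¹ is homeomorphic to an open interval; in particular, if A ⊊ S¹ is homeomorphic to [0,1] then S¹ \ A is path-connected. -/

import Mathlib

open Real Set Function

noncomputable def sphereExp : ℝ → ↥(Metric.sphere (0 : ℂ) 1) := fun t => Circle.exp t

lemma sphereExp_continuous : Continuous sphereExp := Circle.exp.continuous

lemma sphereExp_isOpenMap : IsOpenMap sphereExp := by
  have h : sphereExp = fun t : ℝ => AddCircle.homeomorphCircle' (t : AddCircle (2 * π)) := by
    funext t
    exact (AddCircle.homeomorphCircle'_apply_mk t).symm
  rw [h]
  exact AddCircle.homeomorphCircle'.isOpenMap.comp QuotientAddGroup.isOpenMap_coe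

lemma sphereExp_surjective : Function.Surjective sphereExp :=
  fun z => ⟨Complex.arg (z : ℂ), Circle.exp_arg z⟩

lemma sphereExp_inj {x y : ℝ} (h : sphereExp x = sphereExp y) (hxy : |x - y| < 2 * π) :
    x = y := by
  obtain ⟨m, hm⟩ := Circle.exp_eq_exp.mp h
  have habs : |x - y| = |(m : ℝ)| * (2 * π) := by
    rw [hm, show y + m * (2 * π) - y = m * (2 * π) by ring, abs_mul,
      abs_of_pos Real.two_pi_pos]
  have hm0 : m = 0 := by
    by_contra h0
    have h1 : (1 : ℤ) ≤ |m| := Int.one_le_abs h0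
    have h1' : (1 : ℝ) ≤ |(m : ℝ)| := by
      rw [← Int.cast_abs]; exact_mod_cast h1
    nlinarith [Real.two_pi_pos]
  rw [hm0] at hm; simpa using hm

theorem arc_complement_in_circle
    (A : Set (Metric.sphere (0 : ℂ) 1))
    (hA : Nonempty (A ≃ₜ unitInterval)) (hne : A ≠ Set.univ) :
    Nonempty ((Aᶜ : Set (Metric.sphere (0 : ℂ) 1)) ≃ₜ Set.Ioo (0 : ℝ) 1) ∧
    IsPathConnected Aᶜ := by
  have two_pi_pos : (0 : ℝ) < 2 * π := Real.two_pi_pos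
  obtain ⟨h⟩ := hA
  obtain ⟨p, hp⟩ := (Set.ne_univ_iff_exists_notMem A).mp hne
  have hArange : A = Set.range (fun x : unitInterval =>
      ((h.symm x : A) : Metric.sphere (0 : ℂ) 1)) := by
    ext z
    constructor
    · intro hz
      exact ⟨h ⟨z, hz⟩, by simp⟩
    · rintro ⟨x, rfl⟩
      exact (h.symm x).2
  have hAcomp : IsCompact A :=
    hArange ▸ isCompact_range (continuous_subtype_val.comp h.symm.continuous)
  have hAconn : IsConnected A :=
    hArange ▸ isConnected_range (continuous_subtype_val.comp h.symm.continuous)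
  have hAclosed : IsClosed A := hAcomp.isClosed
  obtain ⟨θ₀, hθ₀⟩ := sphereExp_surjective p
  set f : ℝ → Metric.sphere (0 : ℂ) 1 := fun t => sphereExp (θ₀ + t) with hfdef
  have hfc : Continuous f := sphereExp_continuous.comp (continuous_const.add continuous_id)
  have hfo : IsOpenMap f := sphereExp_isOpenMap.comp (Homeomorph.addLeft θ₀).isOpenMap
  have hper : Function.Periodic f (2 * π) := by
    intro t
    show sphereExp (θ₀ + (t + 2 * π)) = sphereExp (θ₀ + t)
    rw [← add_assoc]
    exact Circle.exp_add_two_pi (θ₀ + t)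
  have hfinj : ∀ {x y : ℝ}, f x = f y → |x - y| < 2 * π → x = y := by
    intro x y hxy hlt
    have := sphereExp_inj hxy (by rwa [show θ₀ + x - (θ₀ + y) = x - y by ring])
    linarith
  have hf0 : f 0 = p := by
    show sphereExp (θ₀ + 0) = p
    rw [add_zero]; exact hθ₀
  have hcover : ∀ z : Metric.sphere (0 : ℂ) 1, ∃ t ∈ Set.Ico 0 (2 * π), f t = z := by
    intro z
    obtain ⟨s, hs⟩ := sphereExp_surjective z
    refine ⟨toIcoMod two_pi_pos 0 (s - θ₀), toIcoMod_mem_Ico' two_pi_pos _, ?_⟩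
    rw [← self_sub_toIcoDiv_zsmul two_pi_pos 0 (s - θ₀), hper.sub_zsmul_eq]
    show sphereExp (θ₀ + (s - θ₀)) = z
    rw [show θ₀ + (s - θ₀) = s by ring]
    exact hs
  have hinjOn : ∀ c d : ℝ, d - c ≤ 2 * π → Set.InjOn f (Set.Ioo c d) := by
    intro c d hcd x hx y hy hxy
    refine hfinj hxy ?_
    rw [abs_sub_lt_iff]
    constructor <;> linarith [hx.1, hx.2, hy.1, hy.2]
  set U : Set ℝ := Set.Ioo 0 (2 * π) with hUdef
  have hembU : Topology.IsOpenEmbedding (U.restrict f) :=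
    Topology.IsOpenEmbedding.of_continuous_injective_isOpenMap
      (hfc.comp continuous_subtype_val)
      (fun x y hxy => Subtype.ext (hinjOn 0 (2 * π) (by linarith) x.2 y.2 hxy))
      (hfo.restrict isOpen_Ioo)
  let Φ : U ≃ₜ Set.range (U.restrict f) := hembU.isEmbedding.toHomeomorph
  have hΦ : ∀ x : U, (Φ x : Metric.sphere (0 : ℂ) 1) = f x := fun x => rfl
  have hAsub : ∀ z ∈ A, z ∈ Set.range (U.restrict f) := by
    intro z hz
    obtain ⟨t, ht, rfl⟩ := hcover z
    have ht0 : t ≠ 0 := by rintro rfl; rw [hf0] at hz; exact hp hz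
    exact ⟨⟨t, ⟨lt_of_le_of_ne ht.1 (Ne.symm ht0), ht.2⟩⟩, rfl⟩
  set g : A → ℝ := fun a => (Φ.symm ⟨(a : Metric.sphere (0 : ℂ) 1), hAsub a a.2⟩ : ℝ) with hgdef
  have hgc : Continuous g :=
    continuous_subtype_val.comp (Φ.symm.continuous.comp
      (Continuous.subtype_mk continuous_subtype_val _))
  have hgU : ∀ a : A, g a ∈ U := fun a => (Φ.symm _).2
  have hfg : ∀ a : A, f (g a) = (a : Metric.sphere (0 : ℂ) 1) := by
    intro a
    have h1 := Φ.apply_symm_apply ⟨(a : Metric.sphere (0 : ℂ) 1), hAsub a a.2⟩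
    have h2 := congrArg Subtype.val h1
    rw [← hΦ (Φ.symm ⟨(a : Metric.sphere (0 : ℂ) 1), hAsub a a.2⟩)]
    exact h2
  haveI : ConnectedSpace A := Subtype.connectedSpace hAconn
  haveI : CompactSpace A := isCompact_iff_compactSpace.mp hAcomp
  have hKconn : IsConnected (Set.range g) := isConnected_range hgc
  have hKcomp : IsCompact (Set.range g) := isCompact_range hgc
  have hKmem : ∀ t, t ∈ Set.range g ↔ t ∈ U ∧ f t ∈ A := by
    intro t
    constructor
    · rintro ⟨a, rfl⟩
      exact ⟨hgU a, by rw [hfg a]; exact a.2⟩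
    · rintro ⟨htU, htA⟩
      refine ⟨⟨f t, htA⟩, ?_⟩
      have hΦt : Φ ⟨t, htU⟩ = ⟨f t, hAsub _ htA⟩ := Subtype.ext (hΦ ⟨t, htU⟩)
      show (Φ.symm ⟨f t, _⟩ : ℝ) = t
      rw [← hΦt, Φ.symm_apply_apply]
  set a := sInf (Set.range g) with hadef
  set b := sSup (Set.range g) with hbdef
  have hKIcc : Set.range g = Set.Icc a b := eq_Icc_of_connected_compact hKconn hKcomp
  have hKne := hKconn.nonempty
  have hab : a ≤ b := Set.nonempty_Icc.mp (hKIcc ▸ hKne)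
  have haK : a ∈ Set.range g := hKIcc ▸ Set.left_mem_Icc.mpr hab
  have hbK : b ∈ Set.range g := hKIcc ▸ Set.right_mem_Icc.mpr hab
  obtain ⟨ha0, ha2⟩ : 0 < a ∧ a < 2 * π := ((hKmem a).mp haK).1
  obtain ⟨hb0, hb2⟩ : 0 < b ∧ b < 2 * π := ((hKmem b).mp hbK).1
  have hcompl : Aᶜ = f '' Set.Ioo (b - 2 * π) a := by
    ext z
    simp only [Set.mem_compl_iff, Set.mem_image, Set.mem_Ioo]
    constructor
    · intro hz
      obtain ⟨t, ht, rfl⟩ := hcover z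
      rcases eq_or_lt_of_le ht.1 with h0 | h0
      · exact ⟨0, ⟨by linarith, ha0⟩, by rw [← h0]⟩
      · have htU : t ∈ U := ⟨h0, ht.2⟩
        have htK : t ∉ Set.Icc a b := by
          rw [← hKIcc]
          intro hK
          exact hz ((hKmem t).mp hK).2
        rw [Set.mem_Icc, not_and_or, not_le, not_le] at htK
        rcases htK with hlt | hgt
        · exact ⟨t, ⟨by linarith, hlt⟩, rfl⟩
        · exact ⟨t - 2 * π, ⟨by linarith, by linarith [ht.2]⟩, hper.sub_eq t⟩
    · rintro ⟨t, ⟨ht1, ht2⟩, rfl⟩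
      intro hfA
      rcases lt_trichotomy t 0 with hneg | rfl | hpos
      · have htU : t + 2 * π ∈ U := ⟨by linarith, by linarith⟩
        have : t + 2 * π ∈ Set.range g := (hKmem _).mpr ⟨htU, by rw [hper t]; exact hfA⟩
        rw [hKIcc, Set.mem_Icc] at this
        linarith [this.2]
      · rw [hf0] at hfA
        exact hp hfA
      · have htU : t ∈ U := ⟨hpos, by linarith⟩
        have : t ∈ Set.range g := (hKmem _).mpr ⟨htU, hfA⟩
        rw [hKIcc, Set.mem_Icc] at this
        linarith [this.1]
  have hba : b - 2 * π < a := by linarith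
  have hemb2 : Topology.IsOpenEmbedding ((Set.Ioo (b - 2 * π) a).restrict f) :=
    Topology.IsOpenEmbedding.of_continuous_injective_isOpenMap
      (hfc.comp continuous_subtype_val)
      (fun x y hxy => Subtype.ext (hinjOn (b - 2 * π) a (by linarith) x.2 y.2 hxy))
      (hfo.restrict isOpen_Ioo)
  let Ψ := hemb2.isEmbedding.toHomeomorph
  have hrange2 : Set.range ((Set.Ioo (b - 2 * π) a).restrict f) = Aᶜ := by
    exact (hcompl.trans (Set.image_eq_range f _)).symm
  have e1 : (Aᶜ : Set (Metric.sphere (0 : ℂ) 1)) ≃ₜ Set.Ioo (b - 2 * π) a :=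
    ((Ψ.trans (Homeomorph.setCongr hrange2))).symm
  have hk : a - (b - 2 * π) ≠ 0 := ne_of_gt (by linarith)
  have hkpos : 0 < a - (b - 2 * π) := by linarith
  let φ := affineHomeomorph (a - (b - 2 * π)) (b - 2 * π) hk
  have himg : φ '' Set.Ioo (0 : ℝ) 1 = Set.Ioo (b - 2 * π) a := by
    ext x
    simp only [Set.mem_image, Set.mem_Ioo, φ, affineHomeomorph_apply]
    constructor
    · rintro ⟨y, ⟨h1, h2⟩, rfl⟩
      constructor <;> nlinarith
    · rintro ⟨h1, h2⟩
      refine ⟨(x - (b - 2 * π)) / (a - (b - 2 * π)),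
        ⟨div_pos (by linarith) hkpos, (div_lt_one hkpos).mpr (by linarith)⟩, ?_⟩
      field_simp
      ring
  have e2 : Set.Ioo (0 : ℝ) 1 ≃ₜ Set.Ioo (b - 2 * π) a :=
    (φ.image _).trans (Homeomorph.setCongr himg)
  refine ⟨⟨e1.trans e2.symm⟩, ?_⟩
  rw [hcompl]
  exact ((convex_Ioo _ _).isPathConnected ⟨0, by constructor <;> linarith⟩).image hfc
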